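/- Let H : ℝⁿ → ℝⁿ be continuous with sup_x ‖H(x) − x‖ ≤ c, and let A : ℝⁿ → ℝⁿ be an invertible linear map with H ∘ f̃ = A ∘ H for a map f̃ : ℝⁿ → ℝⁿ. Then H(x) = H(y) if and only if sup_{k ∈ ℤ} ‖f̃ᵏ(x) − f̃ᵏ(y)‖ ≤ 2c, where f̃ is assumed to be a bijection so that iterates for all k ∈ ℤ are defined and satisfy H ∘ f̃ᵏ = Aᵏ ∘ H, under the additional hypothesis that for every w ≠ 0, sup_{k ∈ ℤ} ‖Aᵏ w‖ = ∞. -/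

import Mathlib

/-- Fibers of a semiconjugacy to a linear map with no nonzero bounded full orbit are
characterized by bounded mutual orbit distance. -/
theorem stmt12 (n : ℕ) (c : ℝ)
    (H : EuclideanSpace ℝ (Fin n) → EuclideanSpace ℝ (Fin n)) (hHcont : Continuous H)
    (hHc : ∀ x, ‖H x - x‖ ≤ c)
    (A : EuclideanSpace ℝ (Fin n) ≃ₗ[ℝ] EuclideanSpace ℝ (Fin n))
    (f : Equiv.Perm (EuclideanSpace ℝ (Fin n)))
    (hsemi : ∀ x, H (f x) = A (H x))
    (hA : ∀ w : EuclideanSpace ℝ (Fin n), w ≠ 0 → ∀ R : ℝ, ∃ k : ℤ, R ≤ ‖(A ^ k) w‖) :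
    ∀ x y : EuclideanSpace ℝ (Fin n),
      H x = H y ↔ ∀ k : ℤ, ‖(f ^ k) x - (f ^ k) y‖ ≤ 2 * c := by
  have hinv : ∀ x, H (f⁻¹ x) = A⁻¹ (H x) := by
    intro x
    have := hsemi (f⁻¹ x)
    rw [show f (f⁻¹ x) = x from f.apply_symm_apply x] at this
    rw [this]
    exact (A.symm_apply_apply _).symm
  have key : ∀ (k : ℤ) (x), H ((f ^ k) x) = (A ^ k) (H x) := by
    intro k
    induction k using Int.induction_on with
    | zero => intro x; simp
    | succ i ih =>
        intro x
        have h1 : f ^ ((i : ℤ) + 1) = f ^ (i : ℤ) * f := zpow_add_one f i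
        have h2 : A ^ ((i : ℤ) + 1) = A ^ (i : ℤ) * A := zpow_add_one A i
        rw [h1, h2]
        show H ((f ^ (i : ℤ)) (f x)) = (A ^ (i : ℤ)) (A (H x))
        rw [ih (f x), hsemi x]
    | pred i ih =>
        intro x
        have h1 : f ^ (-(i : ℤ) - 1) = f ^ (-(i : ℤ)) * f⁻¹ := zpow_sub_one f _
        have h2 : A ^ (-(i : ℤ) - 1) = A ^ (-(i : ℤ)) * A⁻¹ := zpow_sub_one A _
        rw [h1, h2]
        show H ((f ^ (-(i : ℤ))) (f⁻¹ x)) = (A ^ (-(i : ℤ))) (A⁻¹ (H x))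
        rw [ih (f⁻¹ x), hinv x]
  have hc0 : (0 : ℝ) ≤ c := le_trans (norm_nonneg _) (hHc 0)
  intro x y
  constructor
  · intro hxy k
    have hHk : H ((f ^ k) x) = H ((f ^ k) y) := by rw [key k x, key k y, hxy]
    calc ‖(f ^ k) x - (f ^ k) y‖
        = ‖((f ^ k) x - H ((f ^ k) x)) + (H ((f ^ k) y) - (f ^ k) y)‖ := by
          rw [hHk]; congr 1; abel
      _ ≤ ‖(f ^ k) x - H ((f ^ k) x)‖ + ‖H ((f ^ k) y) - (f ^ k) y‖ := norm_add_le _ _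
      _ ≤ c + c := by
          refine add_le_add ?_ (hHc _)
          rw [norm_sub_rev]; exact hHc _
      _ = 2 * c := by ring
  · intro hb
    by_contra hne
    have hw : H x - H y ≠ 0 := sub_ne_zero.mpr hne
    obtain ⟨k, hk⟩ := hA _ hw (4 * c + 1)
    have hAk : (A ^ k) (H x - H y) = H ((f ^ k) x) - H ((f ^ k) y) := by
      rw [map_sub, key k x, key k y]
    have hbound : ‖(A ^ k) (H x - H y)‖ ≤ 4 * c := by
      rw [hAk]
      calc ‖H ((f ^ k) x) - H ((f ^ k) y)‖
          = ‖(H ((f ^ k) x) - (f ^ k) x) + ((f ^ k) x - (f ^ k) y)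
              + ((f ^ k) y - H ((f ^ k) y))‖ := by congr 1; abel
        _ ≤ ‖H ((f ^ k) x) - (f ^ k) x‖ + ‖(f ^ k) x - (f ^ k) y‖
              + ‖(f ^ k) y - H ((f ^ k) y)‖ := norm_add₃_le
        _ ≤ c + 2 * c + c := by
            refine add_le_add (add_le_add (hHc _) (hb k)) ?_
            rw [norm_sub_rev]; exact hHc _
        _ = 4 * c := by ring
    linarith
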